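/- Let P, Q be probability measures with Q ≪ P, w* = dQ/dP, B ≥ 1, w*_B = min(w*, B) with bias Δ_B = E_P[w* - w*_B] ≤ 1/2. Suppose ĥw : X → [0,B] satisfies E_P[|ĥw - w*_B|] ≤ η ≤ 1/4. Then for any measurable score s and all t ∈ ℝ, |F_P(t, ĥw) - F_P(t, w*)| ≤ Δ_B + 3η, where F_P(t,w) = E_P[w(X)·1{s(X,Y)≤t}]/E_P[w(X)]. -/

import Mathlib

open MeasureTheory


lemma weighted_cdf_perturb {Z : Type*} [MeasurableSpace Z] (P : Measure Z)
    [IsProbabilityMeasure P] (w1 w2 g : Z → ℝ)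
    (h1 : Integrable w1 P) (h2 : Integrable w2 P)
    (h1g : Integrable (fun z => w1 z * g z) P)
    (h2g : Integrable (fun z => w2 z * g z) P)
    (hg : ∀ z, g z ∈ Set.Icc (0:ℝ) 1) (h2nn : ∀ z, 0 ≤ w2 z)
    (hM1 : 0 < ∫ z, w1 z ∂P) (hM2 : 0 < ∫ z, w2 z ∂P) :
    |(∫ z, w1 z * g z ∂P) / (∫ z, w1 z ∂P) -
      (∫ z, w2 z * g z ∂P) / (∫ z, w2 z ∂P)| ≤
      (∫ z, |w1 z - w2 z| ∂P) / (∫ z, w1 z ∂P) := by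
  set M1 := ∫ z, w1 z ∂P with hM1def
  set M2 := ∫ z, w2 z ∂P with hM2def
  set r := (∫ z, w2 z * g z ∂P) / M2 with hr
  have hI2nn : 0 ≤ ∫ z, w2 z * g z ∂P := by
    apply integral_nonneg
    intro z; exact mul_nonneg (h2nn z) (hg z).1
  have hI2le : (∫ z, w2 z * g z ∂P) ≤ M2 := by
    apply integral_mono h2g h2
    intro z
    calc w2 z * g z ≤ w2 z * 1 := mul_le_mul_of_nonneg_left (hg z).2 (h2nn z)
    _ = w2 z := mul_one _
  have hr0 : 0 ≤ r := div_nonneg hI2nn hM2.le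
  have hr1 : r ≤ 1 := (div_le_one hM2).mpr hI2le
  have hfun : (fun z => (w1 z - w2 z) * (g z - r)) =
      fun z => (w1 z * g z - w2 z * g z) - r * (w1 z - w2 z) := by
    funext z; ring
  have hIntK : Integrable (fun z => (w1 z - w2 z) * (g z - r)) P := by
    rw [hfun]; exact (h1g.sub h2g).sub ((h1.sub h2).const_mul r)
  have hkey : ∫ z, (w1 z - w2 z) * (g z - r) ∂P = (∫ z, w1 z * g z ∂P) - r * M1 := by
    have A : Integrable (fun z => w1 z * g z - w2 z * g z) P := h1g.sub h2g
    have Bi : Integrable (fun z => r * (w1 z - w2 z)) P := (h1.sub h2).const_mul r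
    have C : Integrable (fun z => w1 z - w2 z) P := h1.sub h2
    rw [hfun, integral_sub A Bi, integral_sub h1g h2g, integral_const_mul,
      integral_sub h1 h2]
    have : (∫ z, w2 z * g z ∂P) = r * M2 := by
      rw [hr, div_mul_cancel₀ _ hM2.ne']
    rw [this]; ring
  have hdiff : (∫ z, w1 z * g z ∂P) / M1 - r =
      (∫ z, (w1 z - w2 z) * (g z - r) ∂P) / M1 := by
    rw [hkey]; field_simp
  rw [hdiff, abs_div, abs_of_pos hM1]
  apply (div_le_div_iff_of_pos_right hM1).mpr
  rw [← Real.norm_eq_abs]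
  apply norm_integral_le_of_norm_le (h1.sub h2).abs
  filter_upwards with z
  rw [Real.norm_eq_abs, abs_mul]
  have hgr : |g z - r| ≤ 1 := by
    rw [abs_le]; constructor <;> nlinarith [(hg z).1, (hg z).2]
  calc |w1 z - w2 z| * |g z - r| ≤ |w1 z - w2 z| * 1 :=
        mul_le_mul_of_nonneg_left hgr (abs_nonneg _)
  _ = |w1 z - w2 z| := mul_one _

/-- Weighted-CDF error of a learned clipped ratio. With `w* = dQ/dP`,
`w*_B = min(w*, B)`, bias `Δ_B = E_P[w* - w*_B] ≤ 1/2`, and `ĥw : Z → [0,B]` with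
`E_P[|ĥw - w*_B|] ≤ η ≤ 1/4`, for every measurable score `s` and every `t`,
`|F_P(t, ĥw) - F_P(t, w*)| ≤ Δ_B + 3η`, where
`F_P(t,w) = E_P[w · 1{s ≤ t}]/E_P[w]`. -/
theorem weighted_cdf_error_learned {Z : Type*} [MeasurableSpace Z]
    (P Q : Measure Z) [IsProbabilityMeasure P] [IsProbabilityMeasure Q]
    (hQP : Q ≪ P) (wstar : Z → ℝ) (hwstar : wstar = fun z => (Q.rnDeriv P z).toReal)
    (hInt : Integrable wstar P) (hmean : ∫ z, wstar z ∂P = 1)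
    (B : ℝ) (hB : 1 ≤ B)
    (wstarB : Z → ℝ) (hwstarB : wstarB = fun z => min (wstar z) B)
    (ΔB : ℝ) (hΔB : ΔB = ∫ z, (wstar z - wstarB z) ∂P) (hΔB_le : ΔB ≤ 1 / 2)
    (η : ℝ) (hη : 0 ≤ η) (hη_le : η ≤ 1 / 4)
    (hw : Z → ℝ) (hhw_meas : Measurable hw) (hhw_mem : ∀ z, hw z ∈ Set.Icc 0 B)
    (hL1 : ∫ z, |hw z - wstarB z| ∂P ≤ η)
    (s : Z → ℝ) (hs : Measurable s)
    (F : ℝ → (Z → ℝ) → ℝ)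
    (hF : F = fun t w =>
      (∫ z, w z * Set.indicator {z' : Z | s z' ≤ t} (fun _ => (1 : ℝ)) z ∂P) /
        ∫ z, w z ∂P) :
    ∀ t : ℝ, |F t hw - F t wstar| ≤ ΔB + 3 * η := by
  intro t
  -- basic facts about the weights
  have wnn : ∀ z, 0 ≤ wstar z := by
    intro z; rw [hwstar]; exact ENNReal.toReal_nonneg
  have wmeas : Measurable wstar := by
    rw [hwstar]; exact (Measure.measurable_rnDeriv Q P).ennreal_toReal
  have wBnn : ∀ z, 0 ≤ wstarB z := by
    intro z; rw [hwstarB]; exact le_min (wnn z) (by linarith)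
  have wBle : ∀ z, wstarB z ≤ wstar z := by
    intro z; rw [hwstarB]; exact min_le_left _ _
  have wBmeas : Measurable wstarB := by
    rw [hwstarB]; exact wmeas.min measurable_const
  have hIntB : Integrable wstarB P := by
    refine hInt.mono wBmeas.aestronglyMeasurable ?_
    filter_upwards with z
    rw [Real.norm_eq_abs, Real.norm_eq_abs, abs_of_nonneg (wBnn z),
      abs_of_nonneg (wnn z)]
    exact wBle z
  have hwnn : ∀ z, 0 ≤ hw z := fun z => (hhw_mem z).1
  have hIntHw : Integrable hw P := by
    refine (integrable_const B).mono hhw_meas.aestronglyMeasurable ?_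
    filter_upwards with z
    rw [Real.norm_eq_abs, Real.norm_eq_abs, abs_of_nonneg (hwnn z),
      abs_of_nonneg (by linarith : (0:ℝ) ≤ B)]
    exact (hhw_mem z).2
  -- means
  have hΔBnn : 0 ≤ ΔB := by
    rw [hΔB]; exact integral_nonneg fun z => sub_nonneg.mpr (wBle z)
  have hMB : ∫ z, wstarB z ∂P = 1 - ΔB := by
    rw [hΔB, integral_sub hInt hIntB, hmean]; ring
  have hMBpos : (1:ℝ)/2 ≤ ∫ z, wstarB z ∂P := by rw [hMB]; linarith
  have hIntdiff : Integrable (fun z => |hw z - wstarB z|) P := (hIntHw.sub hIntB).abs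
  have hMhw : (1:ℝ)/4 ≤ ∫ z, hw z ∂P := by
    have h1 : |∫ z, (hw z - wstarB z) ∂P| ≤ ∫ z, |hw z - wstarB z| ∂P := by
      rw [← Real.norm_eq_abs]
      exact norm_integral_le_of_norm_le hIntdiff (Filter.Eventually.of_forall
        fun z => (Real.norm_eq_abs _).le)
    rw [integral_sub hIntHw hIntB] at h1
    have := abs_le.mp (h1.trans hL1)
    linarith [this.1]
  -- the indicator function
  set g : Z → ℝ := Set.indicator {z' : Z | s z' ≤ t} (fun _ => (1 : ℝ)) with hg
  have hgmem : ∀ z, g z ∈ Set.Icc (0:ℝ) 1 := by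
    intro z
    rw [hg]
    by_cases h : z ∈ {z' : Z | s z' ≤ t} <;>
      simp [Set.indicator_apply, h]
  have hgmeas : Measurable g := by
    rw [hg]
    exact Measurable.indicator measurable_const (measurableSet_le hs measurable_const)
  -- integrability of the products
  have prodInt : ∀ (w : Z → ℝ), Measurable w → Integrable w P →
      Integrable (fun z => w z * g z) P := by
    intro w hwm hwi
    refine hwi.mono (hwm.mul hgmeas).aestronglyMeasurable ?_
    filter_upwards with z
    rw [Real.norm_eq_abs, Real.norm_eq_abs, abs_mul]
    calc |w z| * |g z| ≤ |w z| * 1 := by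
          refine mul_le_mul_of_nonneg_left ?_ (abs_nonneg _)
          rw [abs_of_nonneg (hgmem z).1]; exact (hgmem z).2
    _ = |w z| := mul_one _
  -- Apply the perturbation lemma twice
  have A1 := weighted_cdf_perturb P wstar wstarB g hInt hIntB
    (prodInt wstar wmeas hInt) (prodInt wstarB wBmeas hIntB) hgmem wBnn
    (by rw [hmean]; norm_num) (by linarith)
  have A2 := weighted_cdf_perturb P wstarB hw g hIntB hIntHw
    (prodInt wstarB wBmeas hIntB) (prodInt hw hhw_meas hIntHw) hgmem hwnn
    (by linarith) (by linarith)
  -- evaluate the bounds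
  have e1 : ∫ z, |wstar z - wstarB z| ∂P = ΔB := by
    rw [hΔB]
    exact integral_congr_ae (Filter.Eventually.of_forall fun z =>
      abs_of_nonneg (sub_nonneg.mpr (wBle z)))
  have e2 : ∫ z, |wstarB z - hw z| ∂P ≤ η := by
    calc ∫ z, |wstarB z - hw z| ∂P = ∫ z, |hw z - wstarB z| ∂P :=
          integral_congr_ae (by filter_upwards with z using abs_sub_comm _ _)
    _ ≤ η := hL1
  rw [e1, hmean, div_one] at A1
  have A2' : |(∫ z, wstarB z * g z ∂P) / (∫ z, wstarB z ∂P) -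
      (∫ z, hw z * g z ∂P) / (∫ z, hw z ∂P)| ≤ 2 * η := by
    refine A2.trans ?_
    have hDnn : 0 ≤ ∫ z, |wstarB z - hw z| ∂P :=
      integral_nonneg fun z => abs_nonneg _
    calc (∫ z, |wstarB z - hw z| ∂P) / (∫ z, wstarB z ∂P)
        ≤ η / (1/2) := by
          apply div_le_div₀ hη e2 (by norm_num) hMBpos
    _ = 2 * η := by ring
  have tri := abs_sub_le ((∫ z, hw z * g z ∂P) / (∫ z, hw z ∂P))
    ((∫ z, wstarB z * g z ∂P) / (∫ z, wstarB z ∂P))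
    ((∫ z, wstar z * g z ∂P) / (∫ z, wstar z ∂P))
  rw [abs_sub_comm] at A1 A2'
  rw [hF]
  simp only [← hg]
  rw [hmean, div_one] at tri ⊢
  linarith [tri, A1, A2']
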